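/- Let d ∈ ℕ and let n⁻, n⁰, n⁺ ∈ ℕ^p with n⁰ ≠ 0. Then the one-step truncation bounds on k_d are given explicitly by k^{d+1}_{d,0}(n⁻, n⁰, n⁺) = 1 − (P_d/W(n))·Σ_{i : n_i ≠ 0} w_i·(n⁰_i/n_i + P_{d+1}·(1 − n⁰_i/n_i)) and k^{d+1}_{d,1}(n⁻, n⁰, n⁺) = 1 − (P_d/W(n))·Σ_{i : n_i ≠ 0} w_i·n⁰_i/n_i; consequently k^{d+1}_{d,0}(n⁻, n⁰, n⁺) ≤ k_d(n⁻, n⁰, n⁺) ≤ k^{d+1}_{d,1}(n⁻, n⁰, n⁺), and the width of this bounding interval equals (P_d·P_{d+1}/W(n))·Σ_{i : n_i ≠ 0} w_i·(1 − n⁰_i/n_i). -/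

import Mathlib

/-- Total weight `W(v) = Σ_{i : v_i ≠ 0} w_i` of the axes with at least one available split. -/
noncomputable def bartW (p : ℕ) (w : Fin p → ℝ) (v : Fin p → ℕ) : ℝ :=
  ∑ i ∈ Finset.univ.filter (fun i => v i ≠ 0), w i

/-- The BART sub-correlation function `k_d(n⁻, n⁰, n⁺)`, defined by well-founded recursion
on `Σ_i (n⁻_i + n⁺_i)`. -/
noncomputable def bartK (p : ℕ) (w : Fin p → ℝ) (P : ℕ → ℝ)
    (d : ℕ) (nm n0 np : Fin p → ℕ) : ℝ :=
  if ∀ i, nm i + n0 i + np i = 0 then 1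
  else
    1 - P d * (1 - (1 / bartW p w (fun i => nm i + n0 i + np i)) *
      ∑ i ∈ Finset.univ.filter (fun i => nm i + n0 i + np i ≠ 0),
        (w i / ((nm i + n0 i + np i : ℕ) : ℝ)) *
          ((∑ k ∈ (Finset.range (nm i)).attach,
              bartK p w P (d+1) (Function.update nm i k.1) n0 np) +
           (∑ k ∈ (Finset.range (np i)).attach,
              bartK p w P (d+1) nm n0 (Function.update np i k.1))))
termination_by ∑ i, (nm i + np i)
decreasing_by
  · have hk : k.1 < nm i := Finset.mem_range.mp k.2
    refine Finset.sum_lt_sum (fun j _ => ?_) ⟨i, Finset.mem_univ i, ?_⟩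
    · rcases eq_or_ne j i with rfl | hj
      · simp only [Function.update_self]; omega
      · simp only [Function.update_of_ne hj]; omega
    · simp only [Function.update_self]; omega
  · have hk : k.1 < np i := Finset.mem_range.mp k.2
    refine Finset.sum_lt_sum (fun j _ => ?_) ⟨i, Finset.mem_univ i, ?_⟩
    · rcases eq_or_ne j i with rfl | hj
      · simp only [Function.update_self]; omega
      · simp only [Function.update_of_ne hj]; omega
    · simp only [Function.update_self]; omega

/-- The truncated BART sub-correlation function `k^D_{d,γ}`: same recursion as `k_d` for
`d < D`, with base cases `1` if `n = 0`, `1` at depth `D` if `n⁰ = 0`, and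
`1 - (1-γ)·P_D` at depth `D` if `n⁰ ≠ 0`. -/
noncomputable def bartKT (p : ℕ) (w : Fin p → ℝ) (P : ℕ → ℝ) (D : ℕ) (γ : ℝ)
    (d : ℕ) (nm n0 np : Fin p → ℕ) : ℝ :=
  if ∀ i, nm i + n0 i + np i = 0 then 1
  else if D ≤ d then
    (if ∀ i, n0 i = 0 then 1 else 1 - (1 - γ) * P D)
  else
    1 - P d * (1 - (1 / bartW p w (fun i => nm i + n0 i + np i)) *
      ∑ i ∈ Finset.univ.filter (fun i => nm i + n0 i + np i ≠ 0),
        (w i / ((nm i + n0 i + np i : ℕ) : ℝ)) *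
          ((∑ k ∈ Finset.range (nm i),
              bartKT p w P D γ (d+1) (Function.update nm i k) n0 np) +
           (∑ k ∈ Finset.range (np i),
              bartKT p w P D γ (d+1) nm n0 (Function.update np i k))))
termination_by D - d
decreasing_by all_goals omega


section Aux

variable {p : ℕ} {w : Fin p → ℝ} {P : ℕ → ℝ}

lemma bartW_pos (hw : ∀ i, 0 < w i) {n0 : Fin p → ℕ} (nm np : Fin p → ℕ)
    (hn0 : ∃ j, n0 j ≠ 0) :
    0 < bartW p w (fun i => nm i + n0 i + np i) := by
  obtain ⟨j, hj⟩ := hn0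
  rw [bartW]
  refine Finset.sum_pos' (fun i _ => (hw i).le) ⟨j, ?_, hw j⟩
  simp only [Finset.mem_filter, Finset.mem_univ, true_and]
  omega

lemma bartKT_base (D : ℕ) (γ : ℝ) (nm n0 np : Fin p → ℕ) (hn0 : ∃ j, n0 j ≠ 0) :
    bartKT p w P D γ D nm n0 np = 1 - (1 - γ) * P D := by
  obtain ⟨j, hj⟩ := hn0
  rw [bartKT]
  rw [if_neg (by push_neg; exact ⟨j, by omega⟩), if_pos le_rfl,
    if_neg (by push_neg; exact ⟨j, hj⟩)]

lemma bartKT_eval (γ : ℝ) (d : ℕ) (nm n0 np : Fin p → ℕ) (hn0 : ∃ j, n0 j ≠ 0) :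
    bartKT p w P (d+1) γ d nm n0 np =
      1 - P d * (1 - (1 / bartW p w (fun i => nm i + n0 i + np i)) *
        ∑ i ∈ Finset.univ.filter (fun i => nm i + n0 i + np i ≠ 0),
          (w i / ((nm i + n0 i + np i : ℕ) : ℝ)) *
            (((nm i + np i : ℕ) : ℝ) * (1 - (1 - γ) * P (d+1)))) := by
  obtain ⟨j, hj⟩ := hn0
  rw [bartKT]
  rw [if_neg (by push_neg; exact ⟨j, by omega⟩), if_neg (by omega)]
  have hbase : ∀ nm' np' : Fin p → ℕ,
      bartKT p w P (d+1) γ (d+1) nm' n0 np' = 1 - (1 - γ) * P (d+1) :=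
    fun nm' np' => bartKT_base (d+1) γ nm' n0 np' ⟨j, hj⟩
  simp only [hbase, Finset.sum_const, Finset.card_range, nsmul_eq_mul,
    Nat.cast_add]
  ring_nf
  congr 2
  refine Finset.sum_congr rfl fun i _ => ?_
  ring

lemma bartK_bounds (hw : ∀ i, 0 < w i) (hP : ∀ d, P d ∈ Set.Icc (0 : ℝ) 1)
    (n0 : Fin p → ℕ) (hn0 : ∃ j, n0 j ≠ 0) :
    ∀ (N d : ℕ) (nm np : Fin p → ℕ), (∑ i, (nm i + np i)) = N →
      1 - P d ≤ bartK p w P d nm n0 np ∧ bartK p w P d nm n0 np ≤ 1 := by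
  obtain ⟨j, hj⟩ := hn0
  intro N
  induction N using Nat.strong_induction_on with
  | _ N IH =>
    intro d nm np hsum
    rw [bartK, if_neg (by push_neg; exact ⟨j, by omega⟩)]
    set W := bartW p w (fun i => nm i + n0 i + np i) with hWdef
    have hWpos : 0 < W := bartW_pos hw nm np ⟨j, hj⟩
    have hP1 : 0 ≤ P d := (hP d).1
    have hP2 : P d ≤ 1 := (hP d).2
    have hQ1 : 0 ≤ 1 - P (d+1) := by linarith [(hP (d+1)).2]
    -- inner term bounds
    have hA : ∀ i : Fin p, ∀ k ∈ Finset.range (nm i),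
        1 - P (d+1) ≤ bartK p w P (d+1) (Function.update nm i k) n0 np ∧
        bartK p w P (d+1) (Function.update nm i k) n0 np ≤ 1 := by
      intro i k hk
      have hklt : k < nm i := Finset.mem_range.mp hk
      refine IH (∑ a, (Function.update nm i k a + np a)) ?_ (d+1) _ _ rfl
      rw [← hsum]
      refine Finset.sum_lt_sum (fun a _ => ?_) ⟨i, Finset.mem_univ i, ?_⟩
      · rcases eq_or_ne a i with rfl | ha
        · simp only [Function.update_self]; omega
        · simp only [Function.update_of_ne ha]; omega
      · simp only [Function.update_self]; omega
    have hB : ∀ i : Fin p, ∀ k ∈ Finset.range (np i),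
        1 - P (d+1) ≤ bartK p w P (d+1) nm n0 (Function.update np i k) ∧
        bartK p w P (d+1) nm n0 (Function.update np i k) ≤ 1 := by
      intro i k hk
      have hklt : k < np i := Finset.mem_range.mp hk
      refine IH (∑ a, (nm a + Function.update np i k a)) ?_ (d+1) _ _ rfl
      rw [← hsum]
      refine Finset.sum_lt_sum (fun a _ => ?_) ⟨i, Finset.mem_univ i, ?_⟩
      · rcases eq_or_ne a i with rfl | ha
        · simp only [Function.update_self]; omega
        · simp only [Function.update_of_ne ha]; omega
      · simp only [Function.update_self]; omega
    set S := ∑ i ∈ Finset.univ.filter (fun i => nm i + n0 i + np i ≠ 0),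
        (w i / ((nm i + n0 i + np i : ℕ) : ℝ)) *
          ((∑ k ∈ (Finset.range (nm i)).attach,
              bartK p w P (d+1) (Function.update nm i k.1) n0 np) +
           (∑ k ∈ (Finset.range (np i)).attach,
              bartK p w P (d+1) nm n0 (Function.update np i k.1))) with hSdef
    have hS0 : 0 ≤ S := by
      refine Finset.sum_nonneg (fun i _ => ?_)
      refine mul_nonneg (div_nonneg (hw i).le (Nat.cast_nonneg _)) ?_
      refine add_nonneg (Finset.sum_nonneg fun k _ => ?_)
        (Finset.sum_nonneg fun k _ => ?_)
      · exact le_trans hQ1 (hA i k.1 k.2).1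
      · exact le_trans hQ1 (hB i k.1 k.2).1
    have hSW : S ≤ W := by
      rw [hWdef, bartW]
      refine Finset.sum_le_sum (fun i hi => ?_)
      have hni : nm i + n0 i + np i ≠ 0 := (Finset.mem_filter.mp hi).2
      have hnpos : (0:ℝ) < ((nm i + n0 i + np i : ℕ) : ℝ) := by
        exact_mod_cast Nat.pos_of_ne_zero hni
      have h1 : (∑ k ∈ (Finset.range (nm i)).attach,
          bartK p w P (d+1) (Function.update nm i k.1) n0 np) ≤ (nm i : ℝ) := by
        calc _ ≤ ∑ _k ∈ (Finset.range (nm i)).attach, (1:ℝ) :=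
              Finset.sum_le_sum (fun k _ => (hA i k.1 k.2).2)
          _ = (nm i : ℝ) := by
              simp [Finset.card_attach]
      have h2 : (∑ k ∈ (Finset.range (np i)).attach,
          bartK p w P (d+1) nm n0 (Function.update np i k.1)) ≤ (np i : ℝ) := by
        calc _ ≤ ∑ _k ∈ (Finset.range (np i)).attach, (1:ℝ) :=
              Finset.sum_le_sum (fun k _ => (hB i k.1 k.2).2)
          _ = (np i : ℝ) := by
              simp [Finset.card_attach]
      have hle : ((nm i : ℝ) + np i) ≤ ((nm i + n0 i + np i : ℕ) : ℝ) := by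
        push_cast; linarith [Nat.cast_nonneg (α := ℝ) (n0 i)]
      calc (w i / ((nm i + n0 i + np i : ℕ) : ℝ)) * _
          ≤ (w i / ((nm i + n0 i + np i : ℕ) : ℝ)) * ((nm i + n0 i + np i : ℕ) : ℝ) := by
            refine mul_le_mul_of_nonneg_left ?_ (div_nonneg (hw i).le hnpos.le)
            calc _ ≤ (nm i : ℝ) + np i := add_le_add h1 h2
              _ ≤ _ := hle
        _ = w i := div_mul_cancel₀ _ hnpos.ne'
    have hd1 : 0 ≤ 1 / W * S := mul_nonneg (by positivity) hS0
    have hd2 : 1 / W * S ≤ 1 := by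
      rw [div_mul_eq_mul_div, one_mul, div_le_one hWpos]; exact hSW
    constructor <;> nlinarith

end Aux

/-- One-step truncation bounds on `k_d` (Equation 30 of the paper): explicit formulas for
`k^{d+1}_{d,0}` and `k^{d+1}_{d,1}` when `n⁰ ≠ 0`, the resulting bounds on `k_d`, and the
width of the bounding interval. -/
theorem bartK_one_step_bounds
    (p : ℕ) (hp : 1 ≤ p) (w : Fin p → ℝ) (hw : ∀ i, 0 < w i)
    (P : ℕ → ℝ) (hP : ∀ d, P d ∈ Set.Icc (0 : ℝ) 1)
    (d : ℕ) (nm n0 np : Fin p → ℕ) (hn0 : n0 ≠ 0) :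
    bartKT p w P (d + 1) 0 d nm n0 np =
      1 - (P d / bartW p w (fun i => nm i + n0 i + np i)) *
        ∑ i ∈ Finset.univ.filter (fun i => nm i + n0 i + np i ≠ 0),
          w i * ((n0 i : ℝ) / ((nm i + n0 i + np i : ℕ) : ℝ) +
            P (d + 1) * (1 - (n0 i : ℝ) / ((nm i + n0 i + np i : ℕ) : ℝ))) ∧
    bartKT p w P (d + 1) 1 d nm n0 np =
      1 - (P d / bartW p w (fun i => nm i + n0 i + np i)) *
        ∑ i ∈ Finset.univ.filter (fun i => nm i + n0 i + np i ≠ 0),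
          w i * ((n0 i : ℝ) / ((nm i + n0 i + np i : ℕ) : ℝ)) ∧
    (bartKT p w P (d + 1) 0 d nm n0 np ≤ bartK p w P d nm n0 np ∧
      bartK p w P d nm n0 np ≤ bartKT p w P (d + 1) 1 d nm n0 np) ∧
    bartKT p w P (d + 1) 1 d nm n0 np - bartKT p w P (d + 1) 0 d nm n0 np =
      (P d * P (d + 1) / bartW p w (fun i => nm i + n0 i + np i)) *
        ∑ i ∈ Finset.univ.filter (fun i => nm i + n0 i + np i ≠ 0),
          w i * (1 - (n0 i : ℝ) / ((nm i + n0 i + np i : ℕ) : ℝ)) := by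
  
  obtain ⟨j, hj⟩ : ∃ j, n0 j ≠ 0 := by
    by_contra h
    push_neg at h
    exact hn0 (funext fun i => h i)
  have hne : ¬ ∀ i, nm i + n0 i + np i = 0 := by push_neg; exact ⟨j, by omega⟩
  have hWpos : 0 < bartW p w (fun i => nm i + n0 i + np i) := bartW_pos hw nm np ⟨j, hj⟩
  set W := bartW p w (fun i => nm i + n0 i + np i) with hWdef
  have hP1 : 0 ≤ P d := (hP d).1
  have hQ0 : 0 ≤ P (d+1) := (hP (d+1)).1
  have hQ1 : 0 ≤ 1 - P (d+1) := by linarith [(hP (d+1)).2]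
  -- general closed formula for the one-step truncation
  have hform : ∀ γ : ℝ, bartKT p w P (d + 1) γ d nm n0 np =
      1 - (P d / W) *
        ∑ i ∈ Finset.univ.filter (fun i => nm i + n0 i + np i ≠ 0),
          w i * (1 - (1 - (1 - γ) * P (d+1)) *
            (1 - (n0 i : ℝ) / ((nm i + n0 i + np i : ℕ) : ℝ))) := by
    intro γ
    rw [bartKT_eval γ d nm n0 np ⟨j, hj⟩]
    have hT : (∑ i ∈ Finset.univ.filter (fun i => nm i + n0 i + np i ≠ 0),
        (w i / ((nm i + n0 i + np i : ℕ) : ℝ)) *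
          (((nm i + np i : ℕ) : ℝ) * (1 - (1 - γ) * P (d+1)))) =
        ∑ i ∈ Finset.univ.filter (fun i => nm i + n0 i + np i ≠ 0),
          w i * ((1 - (1 - γ) * P (d+1)) *
            (1 - (n0 i : ℝ) / ((nm i + n0 i + np i : ℕ) : ℝ))) := by
      refine Finset.sum_congr rfl fun i hi => ?_
      have hni : nm i + n0 i + np i ≠ 0 := (Finset.mem_filter.mp hi).2
      have hn : ((nm i + n0 i + np i : ℕ) : ℝ) ≠ 0 := Nat.cast_ne_zero.mpr hni
      push_cast at hn ⊢
      field_simp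
      ring_nf
    rw [hT]
    have hsplit : (∑ i ∈ Finset.univ.filter (fun i => nm i + n0 i + np i ≠ 0),
        w i * (1 - (1 - (1 - γ) * P (d+1)) *
          (1 - (n0 i : ℝ) / ((nm i + n0 i + np i : ℕ) : ℝ)))) =
        W - ∑ i ∈ Finset.univ.filter (fun i => nm i + n0 i + np i ≠ 0),
          w i * ((1 - (1 - γ) * P (d+1)) *
            (1 - (n0 i : ℝ) / ((nm i + n0 i + np i : ℕ) : ℝ))) := by
      rw [hWdef, bartW, ← Finset.sum_sub_distrib]
      exact Finset.sum_congr rfl fun i _ => by ring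
    rw [hsplit]
    rw [← hWdef, mul_sub (P d / W), div_mul_cancel₀ _ hWpos.ne']; ring
  have hWne : W ≠ 0 := hWpos.ne'
  -- the two explicit formulas
  have heq0 : bartKT p w P (d + 1) 0 d nm n0 np =
      1 - (P d / W) *
        ∑ i ∈ Finset.univ.filter (fun i => nm i + n0 i + np i ≠ 0),
          w i * ((n0 i : ℝ) / ((nm i + n0 i + np i : ℕ) : ℝ) +
            P (d + 1) * (1 - (n0 i : ℝ) / ((nm i + n0 i + np i : ℕ) : ℝ))) := by
    rw [hform 0]
    congr 1
    congr 1
    exact Finset.sum_congr rfl fun i _ => by ring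
  have heq1 : bartKT p w P (d + 1) 1 d nm n0 np =
      1 - (P d / W) *
        ∑ i ∈ Finset.univ.filter (fun i => nm i + n0 i + np i ≠ 0),
          w i * ((n0 i : ℝ) / ((nm i + n0 i + np i : ℕ) : ℝ)) := by
    rw [hform 1]
    congr 1
    congr 1
    exact Finset.sum_congr rfl fun i _ => by ring
  -- unfold bartK one step
  have hK : bartK p w P d nm n0 np =
      1 - P d * (1 - (1 / W) *
        ∑ i ∈ Finset.univ.filter (fun i => nm i + n0 i + np i ≠ 0),
          (w i / ((nm i + n0 i + np i : ℕ) : ℝ)) *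
            ((∑ k ∈ (Finset.range (nm i)).attach,
                bartK p w P (d+1) (Function.update nm i k.1) n0 np) +
             (∑ k ∈ (Finset.range (np i)).attach,
                bartK p w P (d+1) nm n0 (Function.update np i k.1)))) := by
    rw [bartK, if_neg hne]
  -- bounds on the inner recursive values
  have hinner : ∀ (nm' np' : Fin p → ℕ),
      1 - P (d+1) ≤ bartK p w P (d+1) nm' n0 np' ∧
      bartK p w P (d+1) nm' n0 np' ≤ 1 :=
    fun nm' np' => bartK_bounds hw hP n0 ⟨j, hj⟩ _ (d+1) nm' np' rfl
  -- compare the three sums termwise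
  have hsumlow : (∑ i ∈ Finset.univ.filter (fun i => nm i + n0 i + np i ≠ 0),
        (w i / ((nm i + n0 i + np i : ℕ) : ℝ)) *
          (((nm i + np i : ℕ) : ℝ) * (1 - (1 - (0:ℝ)) * P (d+1)))) ≤
      ∑ i ∈ Finset.univ.filter (fun i => nm i + n0 i + np i ≠ 0),
        (w i / ((nm i + n0 i + np i : ℕ) : ℝ)) *
          ((∑ k ∈ (Finset.range (nm i)).attach,
              bartK p w P (d+1) (Function.update nm i k.1) n0 np) +
           (∑ k ∈ (Finset.range (np i)).attach,
              bartK p w P (d+1) nm n0 (Function.update np i k.1))) := by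
    refine Finset.sum_le_sum fun i _ => ?_
    refine mul_le_mul_of_nonneg_left ?_ (div_nonneg (hw i).le (Nat.cast_nonneg _))
    have hA : (nm i : ℝ) * (1 - P (d+1)) ≤
        ∑ k ∈ (Finset.range (nm i)).attach,
          bartK p w P (d+1) (Function.update nm i k.1) n0 np := by
      calc (nm i : ℝ) * (1 - P (d+1))
          = ∑ _k ∈ (Finset.range (nm i)).attach, (1 - P (d+1)) := by
            simp [Finset.card_attach, mul_comm]
            ring
        _ ≤ _ := Finset.sum_le_sum fun k _ => (hinner _ _).1
    have hB : (np i : ℝ) * (1 - P (d+1)) ≤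
        ∑ k ∈ (Finset.range (np i)).attach,
          bartK p w P (d+1) nm n0 (Function.update np i k.1) := by
      calc (np i : ℝ) * (1 - P (d+1))
          = ∑ _k ∈ (Finset.range (np i)).attach, (1 - P (d+1)) := by
            simp [Finset.card_attach, mul_comm]
            ring
        _ ≤ _ := Finset.sum_le_sum fun k _ => (hinner _ _).1
    have : ((nm i + np i : ℕ) : ℝ) * (1 - (1 - (0:ℝ)) * P (d+1))
        = (nm i : ℝ) * (1 - P (d+1)) + (np i : ℝ) * (1 - P (d+1)) := by
      push_cast; ring
    rw [this]
    linarith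
  have hsumhigh : (∑ i ∈ Finset.univ.filter (fun i => nm i + n0 i + np i ≠ 0),
        (w i / ((nm i + n0 i + np i : ℕ) : ℝ)) *
          ((∑ k ∈ (Finset.range (nm i)).attach,
              bartK p w P (d+1) (Function.update nm i k.1) n0 np) +
           (∑ k ∈ (Finset.range (np i)).attach,
              bartK p w P (d+1) nm n0 (Function.update np i k.1)))) ≤
      ∑ i ∈ Finset.univ.filter (fun i => nm i + n0 i + np i ≠ 0),
        (w i / ((nm i + n0 i + np i : ℕ) : ℝ)) *
          (((nm i + np i : ℕ) : ℝ) * (1 - (1 - (1:ℝ)) * P (d+1))) := by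
    refine Finset.sum_le_sum fun i _ => ?_
    refine mul_le_mul_of_nonneg_left ?_ (div_nonneg (hw i).le (Nat.cast_nonneg _))
    have hA : (∑ k ∈ (Finset.range (nm i)).attach,
          bartK p w P (d+1) (Function.update nm i k.1) n0 np) ≤ (nm i : ℝ) := by
      calc _ ≤ ∑ _k ∈ (Finset.range (nm i)).attach, (1:ℝ) :=
            Finset.sum_le_sum fun k _ => (hinner _ _).2
        _ = (nm i : ℝ) := by simp [Finset.card_attach]
    have hB : (∑ k ∈ (Finset.range (np i)).attach,
          bartK p w P (d+1) nm n0 (Function.update np i k.1)) ≤ (np i : ℝ) := by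
      calc _ ≤ ∑ _k ∈ (Finset.range (np i)).attach, (1:ℝ) :=
            Finset.sum_le_sum fun k _ => (hinner _ _).2
        _ = (np i : ℝ) := by simp [Finset.card_attach]
    have : ((nm i + np i : ℕ) : ℝ) * (1 - (1 - (1:ℝ)) * P (d+1))
        = (nm i : ℝ) + (np i : ℝ) := by push_cast; ring
    rw [this]
    linarith
  have hWinv : (0:ℝ) ≤ 1 / W := by positivity
  refine ⟨heq0, heq1, ⟨?_, ?_⟩, ?_⟩
  · rw [bartKT_eval 0 d nm n0 np ⟨j, hj⟩, hK]
    rw [← hWdef]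
    nlinarith [mul_nonneg (mul_nonneg hP1 hWinv) (sub_nonneg.mpr hsumlow)]
  · rw [bartKT_eval 1 d nm n0 np ⟨j, hj⟩, hK]
    rw [← hWdef]
    nlinarith [mul_nonneg (mul_nonneg hP1 hWinv) (sub_nonneg.mpr hsumhigh)]
  · rw [heq0, heq1]
    have hdiff : (∑ i ∈ Finset.univ.filter (fun i => nm i + n0 i + np i ≠ 0),
          w i * ((n0 i : ℝ) / ((nm i + n0 i + np i : ℕ) : ℝ) +
            P (d + 1) * (1 - (n0 i : ℝ) / ((nm i + n0 i + np i : ℕ) : ℝ)))) -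
        (∑ i ∈ Finset.univ.filter (fun i => nm i + n0 i + np i ≠ 0),
          w i * ((n0 i : ℝ) / ((nm i + n0 i + np i : ℕ) : ℝ))) =
        P (d + 1) * ∑ i ∈ Finset.univ.filter (fun i => nm i + n0 i + np i ≠ 0),
          w i * (1 - (n0 i : ℝ) / ((nm i + n0 i + np i : ℕ) : ℝ)) := by
      rw [← Finset.sum_sub_distrib, Finset.mul_sum]
      exact Finset.sum_congr rfl fun i _ => by ring
    linear_combination (P d / W) * hdiff
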